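/- arXiv:0712.0001 — 2 statements merged into one kernel-verified Lean document; each statement's English description precedes it below -/
import Mathlib

section
/- Let f ∈ ℂ[x,y] be a nonzero polynomial and write f_x = ∂f/∂x, f_y = ∂f/∂y. Assume that the Krull dimension of ℂ[x,y]/(f, f_x, f_y) is at most 0, the Krull dimension of ℂ[x,y]/(f, f_x) is at most 1, and the Krull dimension of ℂ[x,y]/(f, f_y) is at most 1. Then the Krull dimension of the quotient ring ℂ[x,y,ξ,η]/(f·ξ, f·η, f_y·ξ − f_x·η) is at most 2. -/
open MvPolynomial

noncomputable section
namespace Stmt1Aux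


/-- Monomial counting: if all `t^M`-scaled monomials in `s 0, s 1, s 2` of degree ≤ M lie in a
span of quadratically many elements, then `s` is algebraically dependent. -/
lemma not_algIndep {B : Type} [CommRing B] [IsDomain B] [Algebra ℂ B]
    (s : Fin 3 → B) (t : B) (ht : t ≠ 0) (C : ℕ)
    (H : ∀ M : ℕ, ∃ F : Finset B, F.card ≤ C * (M + 1) ^ 2 ∧
      ∀ a : Fin 3 → ℕ, a 0 + a 1 + a 2 ≤ M →
        t ^ M * (s 0 ^ a 0 * s 1 ^ a 1 * s 2 ^ a 2) ∈ Submodule.span ℂ (F : Set B)) :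
    ¬ AlgebraicIndependent ℂ s := by
  intro hind
  set M : ℕ := 30 * C + 30 with hM
  obtain ⟨F, hFcard, hmem⟩ := H M
  set K : ℕ := 10 * C + 11 with hK
  set ι := Fin K × Fin K × Fin K with hι
  have hKM : ∀ p : ι, (p.1 : ℕ) + (p.2.1 : ℕ) + (p.2.2 : ℕ) ≤ M := by
    rintro ⟨a, b, c⟩
    have ha := a.isLt; have hb := b.isLt; have hc := c.isLt
    simp only [hK, hM] at ha hb hc ⊢; omega
  -- the family of scaled monomials
  set v : ι → B := fun p =>
    t ^ M * (s 0 ^ (p.1 : ℕ) * s 1 ^ (p.2.1 : ℕ) * s 2 ^ (p.2.2 : ℕ)) with hv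
  have hvmem : ∀ p : ι, v p ∈ Submodule.span ℂ (F : Set B) := by
    intro p
    exact hmem ![(p.1 : ℕ), (p.2.1 : ℕ), (p.2.2 : ℕ)] (by simpa using hKM p)
  -- exponent finsupp
  set e : ι → (Fin 3 →₀ ℕ) := fun p =>
    Finsupp.equivFunOnFinite.symm ![(p.1 : ℕ), (p.2.1 : ℕ), (p.2.2 : ℕ)] with he
  have he_inj : Function.Injective e := by
    intro p q h
    have h' : (![(p.1 : ℕ), (p.2.1 : ℕ), (p.2.2 : ℕ)] : Fin 3 → ℕ)
        = ![(q.1 : ℕ), (q.2.1 : ℕ), (q.2.2 : ℕ)] :=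
      Finsupp.equivFunOnFinite.symm.injective h
    have h0 := congrFun h' 0
    have h1 := congrFun h' 1
    have h2 := congrFun h' 2
    simp only [Matrix.cons_val_zero, Matrix.cons_val_one, Matrix.head_cons,
      Matrix.cons_val_two, Matrix.tail_cons] at h0 h1 h2
    obtain ⟨a,b,c⟩ := p; obtain ⟨a',b',c'⟩ := q
    simp only at h0 h1 h2
    ext <;> simp [Fin.ext_iff] at h0 h1 h2 ⊢ <;> omega
  -- linear independence of v
  have hli : LinearIndependent ℂ v := by
    rw [Fintype.linearIndependent_iff]
    intro g hg
    -- build the polynomial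
    set Q : MvPolynomial (Fin 3) ℂ := ∑ p : ι, monomial (e p) (g p) with hQ
    have haevalQ : aeval s Q = ∑ p : ι, g p • (s 0 ^ (p.1 : ℕ) * s 1 ^ (p.2.1 : ℕ) * s 2 ^ (p.2.2 : ℕ)) := by
      rw [hQ, map_sum]
      refine Finset.sum_congr rfl fun p _ => ?_
      rw [aeval_monomial, Algebra.smul_def]
      congr 1
      rw [Finsupp.prod_fintype _ _ (fun i => pow_zero (s i)), Fin.prod_univ_three]
      simp [he]
    have htQ : t ^ M * aeval s Q = 0 := by
      rw [haevalQ, Finset.mul_sum, ← hg]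
      refine Finset.sum_congr rfl fun p _ => ?_
      rw [hv, mul_smul_comm]
    have hQ0 : Q = 0 := by
      have : aeval s Q = 0 := by
        rcases mul_eq_zero.mp htQ with h | h
        · exact absurd h (pow_ne_zero _ ht)
        · exact h
      exact algebraicIndependent_iff.mp hind Q this
    intro p
    have : coeff (e p) Q = g p := by
      rw [hQ, coeff_sum]
      rw [Finset.sum_eq_single p]
      · simp [coeff_monomial]
      · intro q _ hqp
        rw [coeff_monomial, if_neg (fun h => hqp (he_inj h))]
      · intro h; exact absurd (Finset.mem_univ p) h
    rw [hQ0] at this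
    simpa using this.symm
  -- cardinality contradiction
  haveI : Module.Finite ℂ (Submodule.span ℂ (F : Set B)) :=
    Module.Finite.span_of_finite ℂ F.finite_toSet
  set w : ι → Submodule.span ℂ (F : Set B) := fun p => ⟨v p, hvmem p⟩ with hw
  have hwli : LinearIndependent ℂ w := by
    have : v = (Submodule.span ℂ (F : Set B)).subtype ∘ w := rfl
    rw [this] at hli
    exact LinearIndependent.of_comp _ hli
  have hcard := hwli.fintype_card_le_finrank
  have hrank : Module.finrank ℂ (Submodule.span ℂ (F : Set B)) ≤ F.card :=
    finrank_span_finset_le_card F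
  have hcard2 : Fintype.card ι = K ^ 3 := by
    simp [hι, Fintype.card_prod, Fintype.card_fin]; ring
  have : K ^ 3 ≤ C * (M + 1) ^ 2 := by
    calc K ^ 3 = Fintype.card ι := hcard2.symm
    _ ≤ Module.finrank ℂ (Submodule.span ℂ (F : Set B)) := hcard
    _ ≤ F.card := hrank
    _ ≤ C * (M + 1) ^ 2 := hFcard
  rw [hK, hM] at this
  nlinarith [this]



/-- Evaluation of a multivariate polynomial at `Fin.cons a b` via `finSuccEquiv`. -/
lemma aeval_cons_eq {B : Type} [CommRing B] [Algebra ℂ B] {n : ℕ} (a : B) (b : Fin n → B)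
    (Q : MvPolynomial (Fin (n + 1)) ℂ) :
    aeval (Fin.cons a b : Fin (n + 1) → B) Q =
      Polynomial.eval a (Polynomial.map (aeval b : MvPolynomial (Fin n) ℂ →ₐ[ℂ] B)
        (finSuccEquiv ℂ n Q)) := by
  have key : (aeval (Fin.cons a b : Fin (n + 1) → B) : MvPolynomial (Fin (n + 1)) ℂ →ₐ[ℂ] B)
      = ((Polynomial.aeval a : Polynomial B →ₐ[B] B).restrictScalars ℂ).comp
          ((Polynomial.mapAlgHom (aeval b : MvPolynomial (Fin n) ℂ →ₐ[ℂ] B)).comp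
            (finSuccEquiv ℂ n).toAlgHom) := by
    apply MvPolynomial.algHom_ext
    intro i
    refine Fin.cases ?_ (fun j => ?_) i
    · simp [finSuccEquiv_X_zero, Polynomial.mapAlgHom]
    · simp [finSuccEquiv_X_succ, Polynomial.mapAlgHom]
  have := congrFun (congrArg (fun (f : MvPolynomial (Fin (n + 1)) ℂ →ₐ[ℂ] B) => (f : _ → B)) key) Q
  simp only [AlgHom.coe_comp, Function.comp_apply, AlgHom.coe_restrictScalars',
    AlgEquiv.toAlgHom_eq_coe, AlgHom.coe_coe] at this
  rw [this, Polynomial.aeval_def, Polynomial.eval]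
  rfl

/-- The key "transcendence degree drops" lemma. -/
lemma drop {B : Type} [CommRing B] [IsDomain B] [Algebra ℂ B] {e : ℕ}
    (h : ∀ v : Fin (e + 1) → B, ¬ AlgebraicIndependent ℂ v)
    (Q : Ideal B) [hQp : Q.IsPrime] (hQ : Q ≠ ⊥) :
    ∀ s : Fin e → B ⧸ Q, ¬ AlgebraicIndependent ℂ s := by
  intro s hs
  obtain ⟨a, haQ, ha0⟩ := (Submodule.ne_bot_iff Q).mp hQ
  have hsurj : Function.Surjective (Ideal.Quotient.mk Q) := Ideal.Quotient.mk_surjective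
  choose b hb using fun i => hsurj (s i)
  have hcons := h (Fin.cons a b)
  rw [algebraicIndependent_iff] at hcons
  push_neg at hcons
  obtain ⟨Q0, hQ0eval, hQ0ne⟩ := hcons
  set q := finSuccEquiv ℂ e Q0 with hq
  set p : Polynomial B := Polynomial.map (aeval b : MvPolynomial (Fin e) ℂ →ₐ[ℂ] B) q with hp
  -- mk of coefficients
  have hmk : ∀ i, Ideal.Quotient.mk Q (p.coeff i) = aeval s (q.coeff i) := by
    intro i
    rw [hp, Polynomial.coeff_map]
    have h2 : (Ideal.Quotient.mkₐ ℂ Q).comp (aeval b : MvPolynomial (Fin e) ℂ →ₐ[ℂ] B)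
        = aeval s := by
      apply MvPolynomial.algHom_ext
      intro i
      simp [hb]
    have := congrFun (congrArg (fun (f : MvPolynomial (Fin e) ℂ →ₐ[ℂ] B ⧸ Q) => (f : _ → B ⧸ Q)) h2) (q.coeff i)
    simpa using this
  have hinj := algebraicIndependent_iff.mp hs
  have hpne : p ≠ 0 := by
    intro h0
    apply hQ0ne
    apply (finSuccEquiv ℂ e).injective
    rw [map_zero, ← hq]
    refine Polynomial.ext fun i => ?_
    have h1 : p.coeff i = 0 := by rw [h0]; simp
    have h2 : aeval s (q.coeff i) = 0 := by rw [← hmk, h1, map_zero]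
    rw [hinj _ h2]; simp
  set k := p.natTrailingDegree with hk
  have hdvd : (Polynomial.X : Polynomial B) ^ k ∣ p :=
    Polynomial.X_pow_dvd_iff.mpr fun d hd => Polynomial.coeff_eq_zero_of_lt_natTrailingDegree hd
  obtain ⟨r, hr⟩ := hdvd
  have heval : Polynomial.eval a p = 0 := by
    rw [← aeval_cons_eq, hQ0eval]
  have hevalr : Polynomial.eval a r = 0 := by
    rw [hr] at heval
    simp only [Polynomial.eval_mul, Polynomial.eval_pow, Polynomial.eval_X] at heval
    rcases mul_eq_zero.mp heval with h | h
    · exact absurd h (pow_ne_zero _ ha0)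
    · exact h
  have hcoeff : p.coeff k = r.coeff 0 := by
    rw [hr]
    have := Polynomial.coeff_X_pow_mul r k 0
    simpa using this
  have hmem : r.coeff 0 ∈ Q := by
    have h1 := Polynomial.X_mul_divX_add r
    have h2 : Polynomial.eval a (Polynomial.X * r.divX + Polynomial.C (r.coeff 0)) = 0 := by
      rw [h1, hevalr]
    simp only [Polynomial.eval_add, Polynomial.eval_mul, Polynomial.eval_X,
      Polynomial.eval_C] at h2
    have h3 : r.coeff 0 = -(a * Polynomial.eval a r.divX) := by linear_combination h2
    rw [h3]
    exact neg_mem (Ideal.mul_mem_right _ _ haQ)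
  have hz : aeval s (q.coeff k) = 0 := by
    rw [← hmk, hcoeff]
    exact Ideal.Quotient.eq_zero_iff_mem.mpr hmem
  have hqk : q.coeff k = 0 := hinj _ hz
  have hpk : p.coeff k = 0 := by
    rw [hp, Polynomial.coeff_map, hqk, map_zero]
  exact Polynomial.trailingCoeff_nonzero_iff_nonzero.mpr hpne
    (by rw [Polynomial.trailingCoeff, ← hk, hpk])

/-- Extracting a quotient chain. -/
lemma quot_chain {R : Type} [CommRing R] {n : ℕ} (P : Fin (n + 2) → Ideal R)
    (hPp : ∀ i, (P i).IsPrime) (hmono : StrictMono P) :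
    ∃ Q : Fin (n + 1) → Ideal (R ⧸ P 0), (∀ i, (Q i).IsPrime) ∧ StrictMono Q ∧ Q 0 ≠ ⊥ := by
  have hsurj : Function.Surjective (Ideal.Quotient.mk (P 0)) := Ideal.Quotient.mk_surjective
  have hker : ∀ i : Fin (n + 1), RingHom.ker (Ideal.Quotient.mk (P 0)) ≤ P i.succ := by
    intro i
    rw [Ideal.mk_ker]
    exact le_of_lt (hmono (Fin.succ_pos i))
  have hcomap : ∀ i : Fin (n + 1),
      Ideal.comap (Ideal.Quotient.mk (P 0)) ((P i.succ).map (Ideal.Quotient.mk (P 0)))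
        = P i.succ := by
    intro i
    rw [Ideal.comap_map_of_surjective _ hsurj, ← RingHom.ker_eq_comap_bot, Ideal.mk_ker,
      sup_eq_left.mpr (le_of_lt (hmono (Fin.succ_pos i)))]
  refine ⟨fun i => (P i.succ).map (Ideal.Quotient.mk (P 0)), fun i => ?_, ?_, ?_⟩
  · exact Ideal.map_isPrime_of_surjective hsurj (hker i)
  · intro i j hij
    have hlt : P i.succ < P j.succ := hmono (Fin.succ_lt_succ_iff.mpr hij)
    constructor
    · exact Ideal.map_mono (le_of_lt hlt)
    · intro hle
      have := Ideal.comap_mono (f := Ideal.Quotient.mk (P 0)) hle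
      rw [hcomap i, hcomap j] at this
      exact absurd (le_antisymm (le_of_lt hlt) this) (ne_of_lt hlt)
  · obtain ⟨x, hx1, hx0⟩ := SetLike.exists_of_lt
      (hmono (show (0 : Fin (n + 2)) < 1 by rw [Fin.lt_def, Fin.val_zero, Fin.val_one]; omega))
    intro hbot
    have hbot' : Ideal.map (Ideal.Quotient.mk (P 0)) (P (0 : Fin (n + 1)).succ) = ⊥ := hbot
    have hm : Ideal.Quotient.mk (P 0) x
        ∈ Ideal.map (Ideal.Quotient.mk (P 0)) (P (0 : Fin (n + 1)).succ) :=
      Ideal.mem_map_of_mem _ (by rw [Fin.succ_zero_eq_one]; exact hx1)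
    rw [hbot'] at hm
    simp only [Ideal.mem_bot] at hm
    exact hx0 (Ideal.Quotient.eq_zero_iff_mem.mp hm)

/-- Main chain bound. -/
lemma rec_chain : ∀ (d : ℕ) (B : Type) (_ : CommRing B) (_ : IsDomain B) (_ : Algebra ℂ B),
    (∀ v : Fin (d + 1) → B, ¬ AlgebraicIndependent ℂ v) →
    ∀ (P : Fin (d + 1) → Ideal B), (∀ i, (P i).IsPrime) → StrictMono P → P 0 ≠ ⊥ → False := by
  intro d
  induction d with
  | zero =>
    intro B _ _ _ h P hPp hmono hbot
    haveI := hPp 0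
    have hd := drop h (P 0) hbot
    refine hd (fun _ => 0) ?_
    have hinj : Function.Injective (algebraMap ℂ (B ⧸ P 0)) := by
      haveI : Nontrivial (B ⧸ P 0) := Ideal.Quotient.nontrivial_iff.mpr (hPp 0).ne_top
      exact (algebraMap ℂ (B ⧸ P 0)).injective
    exact algebraicIndependent_empty_type_iff.mpr hinj
  | succ d ih =>
    intro B _ _ _ h P hPp hmono hbot
    haveI := hPp 0
    obtain ⟨Q, hQp, hQmono, hQbot⟩ := quot_chain P hPp hmono
    have h' := drop h (P 0) hbot
    haveI : IsDomain (B ⧸ P 0) := Ideal.Quotient.isDomain (P 0)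
    exact ih (B ⧸ P 0) inferInstance inferInstance inferInstance h' Q hQp hQmono hQbot



abbrev A2 : Type := MvPolynomial (Fin 2) ℂ
abbrev A4 : Type := MvPolynomial (Fin 4) ℂ

lemma finsupp_apply_le_sum {σ : Type*} (m : σ →₀ ℕ) (i : σ) : m i ≤ m.sum fun _ e => e := by
  by_cases h : m i = 0
  · simp [h]
  · exact Finset.single_le_sum (f := fun a => m a) (fun _ _ => Nat.zero_le _)
      (Finsupp.mem_support_iff.mpr h)

lemma fin2_sum (m : Fin 2 →₀ ℕ) : (m.sum fun _ e => e) = m 0 + m 1 := by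
  rw [Finsupp.sum_fintype _ _ (fun _ => rfl), Fin.sum_univ_two]

lemma fin2_finsupp (m : Fin 2 →₀ ℕ) :
    Finsupp.single (0 : Fin 2) (m 0) + Finsupp.single 1 (m 1) = m := by
  ext i
  fin_cases i <;> simp [Finsupp.single_apply]

lemma mono2_eq (m : Fin 2 →₀ ℕ) (c : ℂ) :
    (monomial m c : A2) = c • (X 0 ^ m 0 * X 1 ^ m 1) := by
  rw [X_pow_eq_monomial, X_pow_eq_monomial, monomial_mul, one_mul, fin2_finsupp,
    smul_monomial, smul_eq_mul, mul_one]

/-- Expansion of the image of a 2-variable polynomial into monomial values. -/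
lemma expand2 {B : Type} [CommRing B] [Algebra ℂ B] (ev : A2 →ₐ[ℂ] B) (h : A2) (E : ℕ)
    (hdeg : h.totalDegree ≤ E) :
    ev h ∈ Submodule.span ℂ
      ((fun ij : ℕ × ℕ => ev (X 0 ^ ij.1 * X 1 ^ ij.2)) '' {ij | ij.1 + ij.2 ≤ E}) := by
  have hrep : ev h = ∑ m ∈ h.support, coeff m h • ev (X 0 ^ m 0 * X 1 ^ m 1) := by
    conv_lhs => rw [as_sum h]
    rw [map_sum]
    exact Finset.sum_congr rfl fun m _ => by rw [mono2_eq, map_smul]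
  rw [hrep]
  apply Submodule.sum_mem
  intro m hm
  refine Submodule.smul_mem _ _ (Submodule.subset_span ⟨(m 0, m 1), ?_, rfl⟩)
  have := le_totalDegree hm
  rw [fin2_sum] at this
  exact le_trans this hdeg

/-- Expansion of a 4-variable aeval, multiplied by `t`, into monomial values. -/
lemma aeval4_mem {B : Type} [CommRing B] [Algebra ℂ B] (g : Fin 4 → B) (t : B)
    (W : Submodule ℂ B) (T : A4) (E : ℕ) (hdeg : T.totalDegree ≤ E)
    (h : ∀ m : Fin 4 →₀ ℕ, (∀ i, m i ≤ E) → t * ∏ i, g i ^ m i ∈ W) :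
    t * aeval g T ∈ W := by
  have hrep : aeval g T = ∑ m ∈ T.support, coeff m T • ∏ i, g i ^ m i := by
    conv_lhs => rw [as_sum T]
    rw [map_sum]
    refine Finset.sum_congr rfl fun m _ => ?_
    rw [aeval_monomial, Algebra.smul_def]
    congr 1
    exact Finsupp.prod_fintype _ _ (fun i => pow_zero (g i))
  rw [hrep, Finset.mul_sum]
  apply Submodule.sum_mem
  intro m hm
  rw [mul_smul_comm]
  refine Submodule.smul_mem _ _ (h m fun i => ?_)
  exact le_trans (finsupp_apply_le_sum m i) (le_trans (le_totalDegree hm) hdeg)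

/-- The leading-monomial reduction: modulo a nonzero relation `ev f = 0`, all monomial values
lie in the span of monomials avoiding the corner `(p, q)`. -/
lemma reduction {B : Type} [CommRing B] [IsDomain B] [Algebra ℂ B]
    (ev : A2 →ₐ[ℂ] B) (f : A2) (hfne : f ≠ 0) (hf0 : ev f = 0) :
    ∃ p q : ℕ, 1 ≤ p + q ∧ ∀ (E i j : ℕ), i + j ≤ E →
      ev (X 0 ^ i * X 1 ^ j) ∈ Submodule.span ℂ
        ((fun ij : ℕ × ℕ => ev (X 0 ^ ij.1 * X 1 ^ ij.2)) ''
          {ij | ij.1 + ij.2 ≤ E ∧ (ij.1 < p ∨ ij.2 < q)}) := by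
  classical
  have hsupp : f.support.Nonempty := support_nonempty.mpr hfne
  set d := f.totalDegree with hd
  have hSd : (f.support.filter fun m => (m.sum fun _ e => e) = d).Nonempty := by
    obtain ⟨m, hm, hmax⟩ := Finset.exists_mem_eq_sup f.support hsupp (fun m => m.sum fun _ e => e)
    exact ⟨m, Finset.mem_filter.mpr ⟨hm, hmax.symm⟩⟩
  obtain ⟨mstar, hmstar, hmax0⟩ := Finset.exists_max_image
    (f.support.filter fun m => (m.sum fun _ e => e) = d) (fun m => m 0) hSd
  obtain ⟨hmstar_supp, hmstar_deg⟩ := Finset.mem_filter.mp hmstar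
  set p := mstar 0 with hp
  set q := mstar 1 with hq
  have hpq : p + q = d := by rw [hp, hq, ← fin2_sum, hmstar_deg]
  have hd1 : 1 ≤ d := by
    by_contra hcon
    push_neg at hcon
    have hd0 : d = 0 := by omega
    have hfC : f = C (coeff 0 f) := by
      apply MvPolynomial.ext
      intro m
      by_cases hm : m = 0
      · subst hm; simp [coeff_C]
      · rw [coeff_C, if_neg (Ne.symm hm)]
        by_contra hne
        have hmem : m ∈ f.support := mem_support_iff.mpr hne
        have hle := le_totalDegree hmem
        rw [← hd] at hle
        have hsum : (m.sum fun _ e => e) = 0 := by omega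
        rw [fin2_sum] at hsum
        apply hm
        rw [← fin2_finsupp m]
        have h0 : m 0 = 0 := by omega
        have h1 : m 1 = 0 := by omega
        rw [h0, h1]
        simp
    rw [hfC, ← MvPolynomial.algebraMap_eq, ev.commutes] at hf0
    have hc0 : coeff 0 f = 0 := by
      apply (algebraMap ℂ B).injective
      rw [map_zero]; exact hf0
    exact hfne (by rw [hfC, hc0, map_zero])
  refine ⟨p, q, by omega, ?_⟩
  intro E
  suffices H : ∀ (N i j : ℕ), (i + j) ^ 2 + i ≤ N → i + j ≤ E →
      ev (X 0 ^ i * X 1 ^ j) ∈ Submodule.span ℂ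
        ((fun ij : ℕ × ℕ => ev (X 0 ^ ij.1 * X 1 ^ ij.2)) ''
          {ij | ij.1 + ij.2 ≤ E ∧ (ij.1 < p ∨ ij.2 < q)}) by
    intro i j hij
    exact H ((i + j) ^ 2 + i) i j le_rfl hij
  intro N
  induction N using Nat.strong_induction_on with
  | _ N IH =>
    intro i j hN hE
    by_cases hcorner : i < p ∨ j < q
    · exact Submodule.subset_span ⟨(i, j), ⟨hE, hcorner⟩, rfl⟩
    · push_neg at hcorner
      obtain ⟨hpi, hqj⟩ := hcorner
      set c := coeff mstar f with hc
      have hcne : c ≠ 0 := mem_support_iff.mp hmstar_supp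
      set g : A2 := f - monomial mstar c with hg
      have hgsupp : ∀ m ∈ g.support, m ∈ f.support ∧ m ≠ mstar := by
        intro m hm
        rw [mem_support_iff] at hm
        rw [hg, coeff_sub, coeff_monomial] at hm
        by_cases hmm : m = mstar
        · subst hmm; simp [hc] at hm
        · refine ⟨mem_support_iff.mpr fun h0 => ?_, hmm⟩
          rw [h0, if_neg (Ne.symm hmm)] at hm
          simp at hm
      set W : A2 := X 0 ^ (i - p) * X 1 ^ (j - q) with hW
      have hWXY : W * (X 0 ^ p * X 1 ^ q) = X 0 ^ i * X 1 ^ j := by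
        rw [hW, mul_mul_mul_comm, ← pow_add, ← pow_add]
        congr 2 <;> omega
      have hkey : c • (X 0 ^ i * X 1 ^ j : A2) = W * f - W * g := by
        rw [hg, mul_sub, sub_sub_cancel, mono2_eq mstar c, ← hp, ← hq, mul_smul_comm, hWXY]
      have hev : c • ev (X 0 ^ i * X 1 ^ j) = - ev (W * g) := by
        have h1 := congrArg ev hkey
        rw [map_smul, map_sub, show ev (W * f) = 0 from by rw [map_mul, hf0, mul_zero],
          zero_sub] at h1
        exact h1
      have hWg : ev (W * g) = ∑ m ∈ g.support,
          coeff m g • ev (X 0 ^ (i - p + m 0) * X 1 ^ (j - q + m 1)) := by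
        conv_lhs => rw [as_sum g]
        rw [Finset.mul_sum, map_sum]
        refine Finset.sum_congr rfl fun m hm => ?_
        rw [mono2_eq m, mul_smul_comm, map_smul]
        congr 2
        rw [hW, mul_mul_mul_comm, ← pow_add, ← pow_add]
      have h2 : ev (X 0 ^ i * X 1 ^ j) = c⁻¹ • (c • ev (X 0 ^ i * X 1 ^ j)) := by
        rw [smul_smul, inv_mul_cancel₀ hcne, one_smul]
      rw [h2, hev]
      refine Submodule.smul_mem _ _ (Submodule.neg_mem _ ?_)
      rw [hWg]
      apply Submodule.sum_mem
      intro m hm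
      refine Submodule.smul_mem _ _ ?_
      obtain ⟨hmf, hmne⟩ := hgsupp m hm
      have hmsum : m 0 + m 1 ≤ d := by
        have h5 := le_totalDegree hmf
        rw [fin2_sum] at h5
        exact h5
      set i' := i - p + m 0 with hi'
      set j' := j - q + m 1 with hj'
      have hiE : i' + j' ≤ i + j := by omega
      have hlt : (i' + j') ^ 2 + i' < N := by
        rcases lt_or_eq_of_le hmsum with hlt' | heq
        · have h1 : i' + j' < i + j := by omega
          have h3 : (i' + j') ^ 2 + i' < (i + j) ^ 2 := by nlinarith
          exact lt_of_lt_of_le h3 (le_trans (Nat.le_add_right _ i) hN)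
        · have hmem2 : m ∈ f.support.filter (fun m => (m.sum fun _ e => e) = d) :=
            Finset.mem_filter.mpr ⟨hmf, by rw [fin2_sum]; omega⟩
          have hle := hmax0 m hmem2
          have hm0p : m 0 < p := by
            rcases lt_or_eq_of_le hle with h | h
            · exact h
            · exfalso
              apply hmne
              have h1 : m 1 = q := by omega
              rw [← fin2_finsupp m, h, h1, hp, hq, fin2_finsupp]
          have h1 : i' + j' = i + j := by omega
          have h2 : i' < i := by omega
          calc (i' + j') ^ 2 + i' = (i + j) ^ 2 + i' := by rw [h1]
          _ < (i + j) ^ 2 + i := by omega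
          _ ≤ N := hN
      exact IH _ hlt i' j' le_rfl (le_trans hiE hE)



lemma degT (S : Fin 3 → A4) (a : Fin 3 → ℕ) (M : ℕ) (ha : a 0 + a 1 + a 2 ≤ M) :
    (S 0 ^ a 0 * S 1 ^ a 1 * S 2 ^ a 2).totalDegree ≤
      ((S 0).totalDegree + (S 1).totalDegree + (S 2).totalDegree) * M := by
  have h1 : (S 0 ^ a 0 * S 1 ^ a 1 * S 2 ^ a 2).totalDegree ≤
      a 0 * (S 0).totalDegree + a 1 * (S 1).totalDegree + a 2 * (S 2).totalDegree := by
    have h2 := totalDegree_mul (S 0 ^ a 0 * S 1 ^ a 1) (S 2 ^ a 2)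
    have h2' := totalDegree_mul (S 0 ^ a 0) (S 1 ^ a 1)
    have h3 := totalDegree_pow (S 0) (a 0)
    have h4 := totalDegree_pow (S 1) (a 1)
    have h5 := totalDegree_pow (S 2) (a 2)
    omega
  have f0 : a 0 * (S 0).totalDegree ≤ M * (S 0).totalDegree :=
    Nat.mul_le_mul_right _ (by omega)
  have f1 : a 1 * (S 1).totalDegree ≤ M * (S 1).totalDegree :=
    Nat.mul_le_mul_right _ (by omega)
  have f2 : a 2 * (S 2).totalDegree ≤ M * (S 2).totalDegree :=
    Nat.mul_le_mul_right _ (by omega)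
  have heq : ((S 0).totalDegree + (S 1).totalDegree + (S 2).totalDegree) * M
      = M * (S 0).totalDegree + M * (S 1).totalDegree + M * (S 2).totalDegree := by ring
  omega

lemma prod_univ_four' {B : Type} [CommRing B] (g : Fin 4 → B) (m : Fin 4 →₀ ℕ) :
    ∏ i, g i ^ m i = g 0 ^ m 0 * g 1 ^ m 1 * g 2 ^ m 2 * g 3 ^ m 3 :=
  Fin.prod_univ_four _

/-- Case 1 : the two last generators vanish. -/
lemma case1 {B : Type} [CommRing B] [IsDomain B] [Algebra ℂ B] (g : Fin 4 → B)
    (h2 : g 2 = 0) (h3 : g 3 = 0) (S : Fin 3 → A4) :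
    ¬ AlgebraicIndependent ℂ (fun i => aeval g (S i)) := by
  classical
  set D := (S 0).totalDegree + (S 1).totalDegree + (S 2).totalDegree with hD
  apply not_algIndep _ 1 one_ne_zero ((D + 1) ^ 2)
  intro M
  refine ⟨Finset.image (fun ij : Fin (D * M + 1) × Fin (D * M + 1) =>
      g 0 ^ (ij.1 : ℕ) * g 1 ^ (ij.2 : ℕ)) Finset.univ, ?_, ?_⟩
  · refine le_trans Finset.card_image_le ?_
    rw [Finset.card_univ]
    simp only [Fintype.card_prod, Fintype.card_fin]
    have hle : D * M + 1 ≤ (D + 1) * (M + 1) := by nlinarith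
    have h6 := Nat.mul_le_mul hle hle
    have heq : (D + 1) * (M + 1) * ((D + 1) * (M + 1)) = (D + 1) ^ 2 * (M + 1) ^ 2 := by ring
    omega
  · intro a ha
    rw [one_pow]
    have hT : aeval g (S 0) ^ a 0 * aeval g (S 1) ^ a 1 * aeval g (S 2) ^ a 2
        = aeval g (S 0 ^ a 0 * S 1 ^ a 1 * S 2 ^ a 2) := by simp [map_mul, map_pow]
    rw [hT]
    refine aeval4_mem g 1 _ _ (D * M) (degT S a M ha) ?_
    intro m hm
    rw [one_mul, prod_univ_four']
    by_cases hm2 : m 2 = 0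
    · by_cases hm3 : m 3 = 0
      · rw [hm2, hm3, pow_zero, pow_zero, mul_one, mul_one]
        refine Submodule.subset_span ?_
        refine Finset.mem_coe.mpr (Finset.mem_image.mpr
          ⟨(⟨m 0, ?_⟩, ⟨m 1, ?_⟩), Finset.mem_univ _, rfl⟩)
        · have := hm 0; omega
        · have := hm 1; omega
      · have hz : g 0 ^ m 0 * g 1 ^ m 1 * g 2 ^ m 2 * g 3 ^ m 3 = 0 := by
          rw [h3, zero_pow hm3, mul_zero]
        rw [hz]; exact Submodule.zero_mem _
    · have hz : g 0 ^ m 0 * g 1 ^ m 1 * g 2 ^ m 2 * g 3 ^ m 3 = 0 := by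
        rw [h2, zero_pow hm2, mul_zero, zero_mul]
      rw [hz]; exact Submodule.zero_mem _

/-- Case 4 : the two first generators are scalars. -/
lemma case4 {B : Type} [CommRing B] [IsDomain B] [Algebra ℂ B] (g : Fin 4 → B) (α β : ℂ)
    (h0 : g 0 = algebraMap ℂ B α) (h1 : g 1 = algebraMap ℂ B β) (S : Fin 3 → A4) :
    ¬ AlgebraicIndependent ℂ (fun i => aeval g (S i)) := by
  classical
  set D := (S 0).totalDegree + (S 1).totalDegree + (S 2).totalDegree with hD
  apply not_algIndep _ 1 one_ne_zero ((D + 1) ^ 2)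
  intro M
  refine ⟨Finset.image (fun ij : Fin (D * M + 1) × Fin (D * M + 1) =>
      g 2 ^ (ij.1 : ℕ) * g 3 ^ (ij.2 : ℕ)) Finset.univ, ?_, ?_⟩
  · refine le_trans Finset.card_image_le ?_
    rw [Finset.card_univ]
    simp only [Fintype.card_prod, Fintype.card_fin]
    have hle : D * M + 1 ≤ (D + 1) * (M + 1) := by nlinarith
    have h6 := Nat.mul_le_mul hle hle
    have heq : (D + 1) * (M + 1) * ((D + 1) * (M + 1)) = (D + 1) ^ 2 * (M + 1) ^ 2 := by ring
    omega
  · intro a ha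
    rw [one_pow]
    have hT : aeval g (S 0) ^ a 0 * aeval g (S 1) ^ a 1 * aeval g (S 2) ^ a 2
        = aeval g (S 0 ^ a 0 * S 1 ^ a 1 * S 2 ^ a 2) := by simp [map_mul, map_pow]
    rw [hT]
    refine aeval4_mem g 1 _ _ (D * M) (degT S a M ha) ?_
    intro m hm
    rw [one_mul, prod_univ_four']
    have hsc : g 0 ^ m 0 * g 1 ^ m 1 * g 2 ^ m 2 * g 3 ^ m 3
        = (α ^ m 0 * β ^ m 1) • (g 2 ^ m 2 * g 3 ^ m 3) := by
      rw [h0, h1, ← map_pow, ← map_pow, Algebra.smul_def, map_mul]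
      ring
    rw [hsc]
    refine Submodule.smul_mem _ _ (Submodule.subset_span ?_)
    refine Finset.mem_coe.mpr (Finset.mem_image.mpr
      ⟨(⟨m 2, ?_⟩, ⟨m 3, ?_⟩), Finset.mem_univ _, rfl⟩)
    · have := hm 2; omega
    · have := hm 3; omega

/-- Case 2/3 : relation `ev f = 0` on the base and `ev w1 * u = ev w2 * v`. -/
lemma case2 {B : Type} [CommRing B] [IsDomain B] [Algebra ℂ B]
    (ev : A2 →ₐ[ℂ] B) (u v : B) (f w1 w2 : A2)
    (hfne : f ≠ 0) (hf0 : ev f = 0)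
    (hw : ev w1 * u = ev w2 * v) (ht : ev w1 ≠ 0)
    (S : Fin 3 → A4) :
    ¬ AlgebraicIndependent ℂ (fun i => aeval ![ev (X 0), ev (X 1), u, v] (S i)) := by
  classical
  obtain ⟨p, q, hpq1, hred⟩ := reduction ev f hfne hf0
  set g : Fin 4 → B := ![ev (X 0), ev (X 1), u, v] with hgdef
  have hg0 : g 0 = ev (X 0) := rfl
  have hg1 : g 1 = ev (X 1) := rfl
  have hg2 : g 2 = u := rfl
  have hg3 : g 3 = v := rfl
  set D := (S 0).totalDegree + (S 1).totalDegree + (S 2).totalDegree with hD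
  set e := w1.totalDegree + w2.totalDegree + 2 with he
  apply not_algIndep _ (ev w1 ^ D) (pow_ne_zero _ ht) ((p + q) * ((e * D + 1) * (2 * D + 1)))
  intro M
  set F1 : Finset B := Finset.image
      (fun ijk : Fin p × Fin (e * D * M + 1) × Fin (2 * (D * M) + 1) =>
      ev (X 0 ^ (ijk.1 : ℕ) * X 1 ^ (ijk.2.1 : ℕ)) * v ^ (ijk.2.2 : ℕ)) Finset.univ with hF1
  set F2 : Finset B := Finset.image
      (fun ijk : Fin (e * D * M + 1) × Fin q × Fin (2 * (D * M) + 1) =>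
      ev (X 0 ^ (ijk.1 : ℕ) * X 1 ^ (ijk.2.1 : ℕ)) * v ^ (ijk.2.2 : ℕ)) Finset.univ with hF2
  refine ⟨F1 ∪ F2, ?_, ?_⟩
  · have k1 : e * D * M + 1 ≤ (e * D + 1) * (M + 1) := by nlinarith
    have k2 : 2 * (D * M) + 1 ≤ (2 * D + 1) * (M + 1) := by nlinarith
    have c1 : F1.card ≤ p * ((e * D * M + 1) * (2 * (D * M) + 1)) := by
      refine le_trans Finset.card_image_le ?_
      rw [Finset.card_univ]
      simp [Fintype.card_prod, Fintype.card_fin]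
    have c2 : F2.card ≤ (e * D * M + 1) * (q * (2 * (D * M) + 1)) := by
      refine le_trans Finset.card_image_le ?_
      rw [Finset.card_univ]
      simp [Fintype.card_prod, Fintype.card_fin]
    refine le_trans (Finset.card_union_le _ _) ?_
    have k3 : p * ((e * D * M + 1) * (2 * (D * M) + 1))
        ≤ p * (((e * D + 1) * (M + 1)) * ((2 * D + 1) * (M + 1))) :=
      Nat.mul_le_mul_left _ (Nat.mul_le_mul k1 k2)
    have k4 : (e * D * M + 1) * (q * (2 * (D * M) + 1))
        ≤ q * (((e * D + 1) * (M + 1)) * ((2 * D + 1) * (M + 1))) := by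
      have h9 : (e * D * M + 1) * (q * (2 * (D * M) + 1))
          = q * ((e * D * M + 1) * (2 * (D * M) + 1)) := by ring
      rw [h9]
      exact Nat.mul_le_mul_left _ (Nat.mul_le_mul k1 k2)
    have h10 : (p + q) * ((e * D + 1) * (2 * D + 1)) * (M + 1) ^ 2
        = p * (((e * D + 1) * (M + 1)) * ((2 * D + 1) * (M + 1)))
          + q * (((e * D + 1) * (M + 1)) * ((2 * D + 1) * (M + 1))) := by ring
    omega
  · intro a ha
    have hts : (ev w1 ^ D) ^ M = ev w1 ^ (D * M) := by rw [← pow_mul]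
    have hT : aeval g (S 0) ^ a 0 * aeval g (S 1) ^ a 1 * aeval g (S 2) ^ a 2
        = aeval g (S 0 ^ a 0 * S 1 ^ a 1 * S 2 ^ a 2) := by simp [map_mul, map_pow]
    rw [hts, hT]
    refine aeval4_mem g (ev w1 ^ (D * M)) _ _ (D * M) (degT S a M ha) ?_
    intro m hm
    rw [prod_univ_four', hg0, hg1, hg2, hg3]
    have key : ev w1 ^ (D * M) * (ev (X 0) ^ m 0 * ev (X 1) ^ m 1 * u ^ m 2 * v ^ m 3)
        = ev (w1 ^ (D * M - m 2) * w2 ^ m 2 * X 0 ^ m 0 * X 1 ^ m 1) * v ^ (m 2 + m 3) := by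
      have hsplit : ev w1 ^ (D * M) = ev w1 ^ (D * M - m 2) * ev w1 ^ m 2 := by
        rw [← pow_add]
        congr 1
        have := hm 2
        omega
      have huv : ev w1 ^ m 2 * u ^ m 2 = ev w2 ^ m 2 * v ^ m 2 := by
        rw [← mul_pow, hw, mul_pow]
      calc ev w1 ^ (D * M) * (ev (X 0) ^ m 0 * ev (X 1) ^ m 1 * u ^ m 2 * v ^ m 3)
          = (ev w1 ^ m 2 * u ^ m 2) *
            (ev w1 ^ (D * M - m 2) * ev (X 0) ^ m 0 * ev (X 1) ^ m 1 * v ^ m 3) := by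
            rw [hsplit]; ring
        _ = (ev w2 ^ m 2 * v ^ m 2) *
            (ev w1 ^ (D * M - m 2) * ev (X 0) ^ m 0 * ev (X 1) ^ m 1 * v ^ m 3) := by rw [huv]
        _ = (ev w1 ^ (D * M - m 2) * ev w2 ^ m 2 * ev (X 0) ^ m 0 * ev (X 1) ^ m 1)
            * v ^ (m 2 + m 3) := by
            rw [pow_add]; ring
        _ = ev (w1 ^ (D * M - m 2) * w2 ^ m 2 * X 0 ^ m 0 * X 1 ^ m 1) * v ^ (m 2 + m 3) := by
            simp [map_mul, map_pow]
    rw [key]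
    -- degree bound for the A2 part
    have hdegh : (w1 ^ (D * M - m 2) * w2 ^ m 2 * X 0 ^ m 0 * X 1 ^ m 1 : A2).totalDegree
        ≤ e * D * M := by
      have t1 := totalDegree_mul (w1 ^ (D * M - m 2) * w2 ^ m 2 * X 0 ^ m 0) (X 1 ^ m 1 : A2)
      have t2 := totalDegree_mul (w1 ^ (D * M - m 2) * w2 ^ m 2) (X 0 ^ m 0 : A2)
      have t3 := totalDegree_mul (w1 ^ (D * M - m 2)) (w2 ^ m 2)
      have t4 := totalDegree_pow w1 (D * M - m 2)
      have t5 := totalDegree_pow w2 (m 2)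
      have t6 := totalDegree_pow (X 0 : A2) (m 0)
      have t7 := totalDegree_pow (X 1 : A2) (m 1)
      have t8 : (X 0 : A2).totalDegree = 1 := totalDegree_X _
      have t9 : (X 1 : A2).totalDegree = 1 := totalDegree_X _
      rw [t8] at t6
      rw [t9] at t7
      have b0 := hm 0
      have b1 := hm 1
      have b2 := hm 2
      have u1 : (D * M - m 2) * w1.totalDegree ≤ D * M * w1.totalDegree :=
        Nat.mul_le_mul_right _ (Nat.sub_le _ _)
      have u2 : m 2 * w2.totalDegree ≤ D * M * w2.totalDegree :=
        Nat.mul_le_mul_right _ b2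
      have heq : e * D * M = D * M * w1.totalDegree + D * M * w2.totalDegree
          + D * M + D * M := by rw [he]; ring
      omega
    have hexp := expand2 ev _ (e * D * M) hdegh
    have hcorner : ev (w1 ^ (D * M - m 2) * w2 ^ m 2 * X 0 ^ m 0 * X 1 ^ m 1)
        ∈ Submodule.span ℂ
        ((fun ij : ℕ × ℕ => ev (X 0 ^ ij.1 * X 1 ^ ij.2)) ''
          {ij | ij.1 + ij.2 ≤ e * D * M ∧ (ij.1 < p ∨ ij.2 < q)}) := by
      refine Submodule.span_le.mpr ?_ hexp
      rintro x ⟨ij, hij, rfl⟩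
      exact hred (e * D * M) ij.1 ij.2 hij
    have hmul := Submodule.apply_mem_span_image_of_mem_span
      (LinearMap.mulRight ℂ (v ^ (m 2 + m 3))) hcorner
    refine Submodule.span_le.mpr ?_ hmul
    rintro x ⟨y, ⟨ij, ⟨hijE, hijpq⟩, rfl⟩, rfl⟩
    simp only [LinearMap.mulRight_apply]
    have hkE : m 2 + m 3 ≤ 2 * (D * M) := by
      have := hm 2; have := hm 3; omega
    rcases hijpq with hp' | hq'
    · refine Submodule.subset_span (Finset.mem_coe.mpr (Finset.mem_union_left _
        (Finset.mem_image.mpr ⟨(⟨ij.1, hp'⟩, ⟨ij.2, by omega⟩, ⟨m 2 + m 3, by omega⟩),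
          Finset.mem_univ _, rfl⟩)))
    · refine Submodule.subset_span (Finset.mem_coe.mpr (Finset.mem_union_right _
        (Finset.mem_image.mpr ⟨(⟨ij.1, by omega⟩, ⟨ij.2, hq'⟩, ⟨m 2 + m 3, by omega⟩),
          Finset.mem_univ _, rfl⟩)))

/-- The case analysis giving dependence of any 3 elements of `A4 ⧸ P`. -/
lemma main_h (f : MvPolynomial (Fin 2) ℂ) (hf : f ≠ 0)
    (h0 : ringKrullDim (MvPolynomial (Fin 2) ℂ ⧸
      Ideal.span {f, pderiv 0 f, pderiv 1 f}) ≤ 0)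
    (P : Ideal A4) (hP : P.IsPrime)
    (hfξ : rename (Fin.castAdd 2) f * X 2 ∈ P)
    (hfη : rename (Fin.castAdd 2) f * X 3 ∈ P)
    (hG : rename (Fin.castAdd 2) (pderiv 1 f) * X 2
        - rename (Fin.castAdd 2) (pderiv 0 f) * X 3 ∈ P) :
    ∀ s : Fin 3 → A4 ⧸ P, ¬ AlgebraicIndependent ℂ s := by
  intro s
  haveI := hP
  haveI : IsDomain (A4 ⧸ P) := Ideal.Quotient.isDomain P
  choose S hS using fun i => Ideal.Quotient.mk_surjective (s i)
  set g : Fin 4 → A4 ⧸ P := fun i => Ideal.Quotient.mk P (X i) with hg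
  have halg : (Ideal.Quotient.mkₐ ℂ P : A4 →ₐ[ℂ] A4 ⧸ P) = aeval g := by
    apply MvPolynomial.algHom_ext
    intro i
    simp [hg]
  have hmk : ∀ T : A4, Ideal.Quotient.mk P T = aeval g T := by
    intro T
    rw [← Ideal.Quotient.mkₐ_eq_mk ℂ, halg]
  have hs_eq : s = fun i => aeval g (S i) := funext fun i => by rw [← hS i, hmk]
  rw [hs_eq]
  set ev : A2 →ₐ[ℂ] A4 ⧸ P := (Ideal.Quotient.mkₐ ℂ P).comp (rename (Fin.castAdd 2)) with hev
  have hevw : ∀ w : A2, ev w = Ideal.Quotient.mk P (rename (Fin.castAdd 2) w) := fun w => rfl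
  have hev0 : ev (X 0) = g 0 := by
    rw [hevw, rename_X]
    congr 1
  have hev1 : ev (X 1) = g 1 := by
    rw [hevw, rename_X]
    congr 1
  by_cases hfP : rename (Fin.castAdd 2) f ∈ P
  · -- f vanishes
    have hf0 : ev f = 0 := by
      rw [hevw]
      exact Ideal.Quotient.eq_zero_iff_mem.mpr hfP
    have hrel : ev (pderiv 1 f) * g 2 = ev (pderiv 0 f) * g 3 := by
      have h1 : Ideal.Quotient.mk P (rename (Fin.castAdd 2) (pderiv 1 f) * X 2
          - rename (Fin.castAdd 2) (pderiv 0 f) * X 3) = 0 :=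
        Ideal.Quotient.eq_zero_iff_mem.mpr hG
      rw [map_sub, map_mul, map_mul, sub_eq_zero] at h1
      rw [hevw, hevw]
      exact h1
    by_cases hfyP : rename (Fin.castAdd 2) (pderiv 1 f) ∈ P
    · by_cases hfxP : rename (Fin.castAdd 2) (pderiv 0 f) ∈ P
      · -- case 4 : singular point
        set Q : Ideal A2 := RingHom.ker (ev : A2 →+* A4 ⧸ P) with hQ
        haveI hQp : Q.IsPrime := RingHom.ker_isPrime _
        have hJQ : Ideal.span {f, pderiv 0 f, pderiv 1 f} ≤ Q := by
          rw [Ideal.span_le]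
          rintro x (rfl | rfl | rfl)
          · exact Ideal.Quotient.eq_zero_iff_mem.mpr hfP
          · exact Ideal.Quotient.eq_zero_iff_mem.mpr hfxP
          · exact Ideal.Quotient.eq_zero_iff_mem.mpr hfyP
        have hQmax : Q.IsMaximal := by
          obtain ⟨Mx, hMxmax, hQMx⟩ := Ideal.exists_le_maximal Q hQp.ne_top
          by_cases heq : Q = Mx
          · rwa [heq]
          exfalso
          set J : Ideal A2 := Ideal.span {f, pderiv 0 f, pderiv 1 f} with hJ
          have hsurj : Function.Surjective (Ideal.Quotient.mk J) :=
            Ideal.Quotient.mk_surjective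
          have hkerJ : RingHom.ker (Ideal.Quotient.mk J) = J := Ideal.mk_ker
          have hJMx : J ≤ Mx := le_trans hJQ hQMx
          haveI hQ'p : (Q.map (Ideal.Quotient.mk J)).IsPrime :=
            Ideal.map_isPrime_of_surjective hsurj (by rw [hkerJ]; exact hJQ)
          haveI hM'p : (Mx.map (Ideal.Quotient.mk J)).IsPrime :=
            Ideal.map_isPrime_of_surjective hsurj (by rw [hkerJ]; exact hJMx)
          have hlt : Q.map (Ideal.Quotient.mk J) < Mx.map (Ideal.Quotient.mk J) := by
            constructor
            · exact Ideal.map_mono hQMx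
            · intro hle
              apply heq
              have hc : ∀ (T : Ideal A2), J ≤ T →
                  Ideal.comap (Ideal.Quotient.mk J) (T.map (Ideal.Quotient.mk J)) = T := by
                intro T hT
                rw [Ideal.comap_map_of_surjective _ hsurj, ← RingHom.ker_eq_comap_bot, hkerJ,
                  sup_eq_left.mpr hT]
              have := Ideal.comap_mono (f := Ideal.Quotient.mk J) hle
              rw [hc Q hJQ, hc Mx hJMx] at this
              exact le_antisymm hQMx this
          -- build a chain of length 1
          set x0 : PrimeSpectrum (A2 ⧸ J) := ⟨Q.map (Ideal.Quotient.mk J), hQ'p⟩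
          set x1 : PrimeSpectrum (A2 ⧸ J) := ⟨Mx.map (Ideal.Quotient.mk J), hM'p⟩
          have hx01 : x0 < x1 := hlt
          let c : LTSeries (PrimeSpectrum (A2 ⧸ J)) :=
            ⟨1, ![x0, x1], by
              intro i
              fin_cases i
              simpa using hx01⟩
          have hlen := Order.LTSeries.length_le_krullDim c
          have h1le : (1 : WithBot (WithTop ℕ)) ≤ ringKrullDim (A2 ⧸ J) := by
            have : c.length = 1 := rfl
            rw [this] at hlen
            exact_mod_cast hlen
          have : (1 : WithBot (WithTop ℕ)) ≤ 0 := le_trans h1le h0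
          norm_num at this
        obtain ⟨x, hxeq⟩ :=
          (MvPolynomial.isMaximal_iff_eq_vanishingIdeal_singleton (I := Q)).mp hQmax
        have hXa : ∀ i : Fin 2, (X i - C (x i) : A2) ∈ Q := by
          intro i
          rw [hxeq]
          rw [MvPolynomial.mem_vanishingIdeal_iff]
          intro y hy
          rw [Set.mem_singleton_iff] at hy
          subst hy
          simp
        have hgc : ∀ i : Fin 2, ev (X i) = algebraMap ℂ (A4 ⧸ P) (x i) := by
          intro i
          have h1 : ev (X i - C (x i)) = 0 := hXa i
          rw [map_sub, sub_eq_zero] at h1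
          rw [h1, ← MvPolynomial.algebraMap_eq, AlgHom.commutes]
        have hg0 : g 0 = algebraMap ℂ (A4 ⧸ P) (x 0) := by rw [← hev0, hgc]
        have hg1 : g 1 = algebraMap ℂ (A4 ⧸ P) (x 1) := by rw [← hev1, hgc]
        exact case4 g (x 0) (x 1) hg0 hg1 S
      · -- case 3 : f_x not in P
        have ht : ev (pderiv 0 f) ≠ 0 := fun h =>
          hfxP (Ideal.Quotient.eq_zero_iff_mem.mp (by rw [← hevw]; exact h))
        have hcase := case2 ev (g 3) (g 2) f (pderiv 0 f) (pderiv 1 f) hf hf0 hrel.symm ht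
          (fun i => rename (Equiv.swap (2 : Fin 4) 3) (S i))
        have hvec : (fun i => aeval ![ev (X 0), ev (X 1), g 3, g 2]
            (rename (Equiv.swap (2 : Fin 4) 3) (S i))) = fun i => aeval g (S i) := by
          funext i
          have hcomp : (![ev (X 0), ev (X 1), g 3, g 2] ∘ (Equiv.swap (2 : Fin 4) 3)) = g := by
            funext j
            fin_cases j
            · simpa [Equiv.swap_apply_def] using hev0
            · simpa [Equiv.swap_apply_def] using hev1
            · simp [Equiv.swap_apply_def]
            · simp [Equiv.swap_apply_def]
          rw [aeval_rename, hcomp]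
        rwa [hvec] at hcase
    · -- case 2 : f_y not in P
      have ht : ev (pderiv 1 f) ≠ 0 := fun h =>
        hfyP (Ideal.Quotient.eq_zero_iff_mem.mp (by rw [← hevw]; exact h))
      have hcase := case2 ev (g 2) (g 3) f (pderiv 1 f) (pderiv 0 f) hf hf0 hrel ht S
      have hvec : ![ev (X 0), ev (X 1), g 2, g 3] = g := by
        funext j
        fin_cases j
        · simpa using hev0
        · simpa using hev1
        · simp
        · simp
      rwa [hvec] at hcase
  · -- case 1 : f invertible, ξ and η vanish
    have h2 : g 2 = 0 := by
      rcases hP.mem_or_mem hfξ with h | h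
      · exact absurd h hfP
      · exact Ideal.Quotient.eq_zero_iff_mem.mpr h
    have h3 : g 3 = 0 := by
      rcases hP.mem_or_mem hfη with h | h
      · exact absurd h hfP
      · exact Ideal.Quotient.eq_zero_iff_mem.mpr h
    exact case1 g h2 h3 S

/-- dimension bound from the dependence criterion. -/
lemma key (I : Ideal A4)
    (h : ∀ P : Ideal A4, P.IsPrime → I ≤ P → ∀ s : Fin 3 → A4 ⧸ P,
      ¬ AlgebraicIndependent ℂ s) :
    ringKrullDim (A4 ⧸ I) ≤ 2 := by
  rcases isEmpty_or_nonempty (PrimeSpectrum (A4 ⧸ I)) with hE | hNE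
  · rw [ringKrullDim, Order.krullDim_eq_bot_iff.mpr hE]
    exact bot_le
  · have hlen : ∀ l : LTSeries (PrimeSpectrum (A4 ⧸ I)), l.length ≤ 2 := by
      intro l
      by_contra hcon
      push_neg at hcon
      set P : Fin 4 → Ideal A4 := fun i =>
        Ideal.comap (Ideal.Quotient.mk I) (l ⟨(i : ℕ), by omega⟩).asIdeal with hPdef
      have hPp : ∀ i, (P i).IsPrime := fun i => Ideal.IsPrime.comap _
      have hsurj : Function.Surjective (Ideal.Quotient.mk I) := Ideal.Quotient.mk_surjective
      have hPmono : StrictMono P := by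
        intro i j hij
        have hlt : l ⟨(i : ℕ), by omega⟩ < l ⟨(j : ℕ), by omega⟩ :=
          l.strictMono (by rw [Fin.mk_lt_mk]; exact hij)
        constructor
        · exact Ideal.comap_mono (le_of_lt hlt)
        · intro hle
          have h1 : Ideal.map (Ideal.Quotient.mk I) (P j) ≤
              Ideal.map (Ideal.Quotient.mk I) (P i) := Ideal.map_mono hle
          rw [hPdef] at h1
          simp only [Ideal.map_comap_of_surjective _ hsurj] at h1
          exact absurd (le_antisymm (le_of_lt hlt) h1) (ne_of_lt hlt)
      have hIP : I ≤ P 0 := by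
        intro x hx
        simp only [hPdef, Ideal.mem_comap]
        rw [Ideal.Quotient.eq_zero_iff_mem.mpr hx]
        exact Submodule.zero_mem _
      obtain ⟨Q, hQp, hQmono, hQbot⟩ := quot_chain P hPp hPmono
      haveI := hPp 0
      haveI : IsDomain (A4 ⧸ P 0) := Ideal.Quotient.isDomain (P 0)
      exact rec_chain 2 (A4 ⧸ P 0) inferInstance inferInstance inferInstance
        (h (P 0) (hPp 0) hIP) Q hQp hQmono hQbot
    rw [ringKrullDim, Order.krullDim_eq_iSup_length]
    have h2 : (⨆ (p : LTSeries (PrimeSpectrum (A4 ⧸ I))), (p.length : ℕ∞)) ≤ (2 : ℕ∞) :=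
      iSup_le fun l => by exact_mod_cast hlen l
    exact le_trans (WithBot.coe_le_coe.mpr h2) (by norm_num)

end Stmt1Aux


/-- If `f ∈ ℂ[x,y]` is nonzero with `dim ℂ[x,y]/(f,fₓ,f_y) ≤ 0`,
`dim ℂ[x,y]/(f,fₓ) ≤ 1` and `dim ℂ[x,y]/(f,f_y) ≤ 1`, then
`dim ℂ[x,y,ξ,η]/(fξ, fη, f_y ξ − fₓ η) ≤ 2`. -/
theorem stmt1 (f : MvPolynomial (Fin 2) ℂ) (hf : f ≠ 0)
    (h0 : ringKrullDim (MvPolynomial (Fin 2) ℂ ⧸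
      Ideal.span {f, pderiv 0 f, pderiv 1 f}) ≤ 0)
    (h1 : ringKrullDim (MvPolynomial (Fin 2) ℂ ⧸
      Ideal.span {f, pderiv 0 f}) ≤ 1)
    (h2 : ringKrullDim (MvPolynomial (Fin 2) ℂ ⧸
      Ideal.span {f, pderiv 1 f}) ≤ 1) :
    ringKrullDim (MvPolynomial (Fin 4) ℂ ⧸
      Ideal.span
        { (rename (Fin.castAdd 2) f) * X 2,
          (rename (Fin.castAdd 2) f) * X 3,
          (rename (Fin.castAdd 2) (pderiv 1 f)) * X 2
            - (rename (Fin.castAdd 2) (pderiv 0 f)) * X 3 }) ≤ 2 := by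
  apply Stmt1Aux.key
  intro P hP hIP s
  apply Stmt1Aux.main_h f hf h0 P hP
  · exact hIP (Ideal.subset_span (Set.mem_insert _ _))
  · exact hIP (Ideal.subset_span (Set.mem_insert_of_mem _ (Set.mem_insert _ _)))
  · exact hIP (Ideal.subset_span (Set.mem_insert_of_mem _ (Set.mem_insert_of_mem _ rfl)))
end
end

section
/- Let f = (x³ + y⁴ + xy³)(x² − y²) ∈ ℂ[x,y]. Then the two derivations δ₁ = (x³ + (1/3)x²y − (4/3)xy²)∂x + ((2/3)x²y + (1/3)xy² − y³)∂y and δ₂ = (−x² + 4xy + 3x²y + 4xy² − y³)∂x + (x² − xy + 3y² + 2xy² + 4y³)∂y belong to Der(−log f) and form a ℂ[x,y]-basis of the ℂ[x,y]-module Der(−log f). -/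
set_option maxHeartbeats 1000000


open MvPolynomial

/-- The `R`-module of logarithmic derivations `Der(−log f) = {δ : f ∣ δ f}`. -/
noncomputable def logDer (f : MvPolynomial (Fin 2) ℂ) :
    Submodule (MvPolynomial (Fin 2) ℂ)
      (Derivation ℂ (MvPolynomial (Fin 2) ℂ) (MvPolynomial (Fin 2) ℂ)) where
  carrier := {δ | f ∣ δ f}
  add_mem' := fun h1 h2 => by simpa using dvd_add h1 h2
  zero_mem' := by simp
  smul_mem' := fun c δ h => by simpa using h.mul_left c

noncomputable def xx : MvPolynomial (Fin 2) ℂ := X 0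
noncomputable def yy : MvPolynomial (Fin 2) ℂ := X 1

/-- `f = (x³ + y⁴ + xy³)(x² − y²)`. -/
noncomputable def f10 : MvPolynomial (Fin 2) ℂ :=
  (xx ^ 3 + yy ^ 4 + xx * yy ^ 3) * (xx ^ 2 - yy ^ 2)

/-- `δ₁ = (x³ + (1/3)x²y − (4/3)xy²)∂x + ((2/3)x²y + (1/3)xy² − y³)∂y`. -/
noncomputable def δ₁ : Derivation ℂ (MvPolynomial (Fin 2) ℂ) (MvPolynomial (Fin 2) ℂ) :=
  (xx ^ 3 + C (1/3 : ℂ) * xx ^ 2 * yy - C (4/3 : ℂ) * xx * yy ^ 2) • pderiv 0 +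
    (C (2/3 : ℂ) * xx ^ 2 * yy + C (1/3 : ℂ) * xx * yy ^ 2 - yy ^ 3) • pderiv 1

/-- `δ₂ = (−x² + 4xy + 3x²y + 4xy² − y³)∂x + (x² − xy + 3y² + 2xy² + 4y³)∂y`. -/
noncomputable def δ₂ : Derivation ℂ (MvPolynomial (Fin 2) ℂ) (MvPolynomial (Fin 2) ℂ) :=
  (-xx ^ 2 + 4 * xx * yy + 3 * xx ^ 2 * yy + 4 * xx * yy ^ 2 - yy ^ 3) • pderiv 0 +
    (xx ^ 2 - xx * yy + 3 * yy ^ 2 + 2 * xx * yy ^ 2 + 4 * yy ^ 3) • pderiv 1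

namespace Stmt10Aux

abbrev C2 : Type := MvPolynomial (Fin 2) ℂ

noncomputable def a1e : C2 := xx ^ 3 + C (1/3 : ℂ) * xx ^ 2 * yy - C (4/3 : ℂ) * xx * yy ^ 2
noncomputable def b1e : C2 := C (2/3 : ℂ) * xx ^ 2 * yy + C (1/3 : ℂ) * xx * yy ^ 2 - yy ^ 3
noncomputable def A2e : C2 := -xx ^ 2 + 4 * xx * yy + 3 * xx ^ 2 * yy + 4 * xx * yy ^ 2 - yy ^ 3
noncomputable def B2e : C2 := xx ^ 2 - xx * yy + 3 * yy ^ 2 + 2 * xx * yy ^ 2 + 4 * yy ^ 3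
noncomputable def FXp : C2 := (-3:C2)*xx^2*yy^2 + (5:C2)*xx^4 - yy^5 + (2:C2)*xx*yy^4 + (3:C2)*xx^2*yy^3
noncomputable def FYp : C2 := (-2:C2)*xx^3*yy - (6:C2)*yy^5 - (5:C2)*xx*yy^4 + (4:C2)*xx^2*yy^3 + (3:C2)*xx^3*yy^2
noncomputable def IA1 : C2 := (-4:C2)*xx*yy^2 + xx^2*yy + (3:C2)*xx^3
noncomputable def IB1 : C2 := (-3:C2)*yy^3 + xx*yy^2 + (2:C2)*xx^2*yy
noncomputable def H1i : C2 := (-18:C2)*yy^2 + (5:C2)*xx*yy + (15:C2)*xx^2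
noncomputable def H2e : C2 := (18:C2)*yy - (5:C2)*xx + (23:C2)*yy^2 + (15:C2)*xx*yy
noncomputable def AL32 : C2 := (-54:C2)*yy^3 + (36:C2)*xx*yy^2 + (90:C2)*xx^2*yy - (60:C2)*xx^3 - (180:C2)*yy^4 + (32:C2)*xx*yy^3 + (300:C2)*xx^2*yy^2 - (605:C2)*xx^3*yy - (90:C2)*yy^5 - (355:C2)*xx*yy^4 + (780:C2)*xx^2*yy^3 - (1030:C2)*xx^3*yy^2 + (224:C2)*yy^6 - (802:C2)*xx*yy^5 + (620:C2)*xx^2*yy^4 - (660:C2)*xx^3*yy^3 + (140:C2)*yy^7 - (428:C2)*xx*yy^6 + (80:C2)*xx^2*yy^5 - (80:C2)*xx^3*yy^4 + (16:C2)*yy^8 - (48:C2)*xx*yy^7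
noncomputable def BE32 : C2 := (18:C2)*xx*yy^3 - (12:C2)*xx^2*yy^2 - (18:C2)*xx^3*yy + (12:C2)*xx^4 - (44:C2)*yy^5 + (60:C2)*xx*yy^4 - (50:C2)*xx^2*yy^3 - (60:C2)*xx^3*yy^2 + (121:C2)*xx^4*yy - (158:C2)*yy^6 + (129:C2)*xx*yy^5 + (37:C2)*xx^2*yy^4 - (156:C2)*xx^3*yy^3 + (206:C2)*xx^4*yy^2 - (256:C2)*yy^7 + (66:C2)*xx*yy^6 + (190:C2)*xx^2*yy^5 - (124:C2)*xx^3*yy^4 + (132:C2)*xx^4*yy^3 - (140:C2)*yy^8 + (8:C2)*xx*yy^7 + (132:C2)*xx^2*yy^6 - (16:C2)*xx^3*yy^5 + (16:C2)*xx^4*yy^4 - (16:C2)*yy^9 + (16:C2)*xx^2*yy^7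
noncomputable def S32 : C2 := (54:C2)*yy^9 + (224:C2)*yy^10 + (248:C2)*yy^11 + (32:C2)*yy^12
noncomputable def s1 : MvPolynomial (Fin 1) ℂ :=
  54*(X 0)^9 + 224*(X 0)^10 + 248*(X 0)^11 + 32*(X 0)^12

lemma pdx : pderiv 0 f10 = FXp := by simp [f10, xx, yy, FXp]; ring
lemma pdy : pderiv 1 f10 = FYp := by simp [f10, xx, yy, FYp]; ring

lemma e3 : (3:C2) * C (1/3 : ℂ) = 1 := by
  rw [show (3:C2) = C (3:ℂ) from (map_ofNat C 3).symm, ← C_mul]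
  norm_num

lemma e43 : (C (4/3 : ℂ) : C2) = C (1/3:ℂ) * 4 := by
  rw [show (4:C2) = C (4:ℂ) from (map_ofNat C 4).symm, ← C_mul]
  congr 1; norm_num

lemma e23 : (C (2/3 : ℂ) : C2) = C (1/3:ℂ) * 2 := by
  rw [show (2:C2) = C (2:ℂ) from (map_ofNat C 2).symm, ← C_mul]
  congr 1; norm_num

lemma chain (δ : Derivation ℂ C2 C2) : δ f10 = δ (X 0) * FXp + δ (X 1) * FYp := by
  have h : (δ (X 0) • pderiv 0 + δ (X 1) • pderiv 1 : Derivation ℂ C2 C2) = δ := by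
    apply derivation_ext
    intro i
    fin_cases i <;> simp
  conv_lhs => rw [← h]
  simp [Derivation.add_apply, Derivation.smul_apply, pdx, pdy, smul_eq_mul]

lemma detI : IA1 * B2e - A2e * IB1 = 3 * f10 := by
  simp only [IA1, B2e, A2e, IB1, f10, xx, yy]; ring

lemma memI1 : IA1 * FXp + IB1 * FYp = H1i * f10 := by
  simp only [IA1, IB1, FXp, FYp, H1i, f10, xx, yy]; ring

lemma memI2 : A2e * FXp + B2e * FYp = H2e * f10 := by
  simp only [A2e, B2e, FXp, FYp, H2e, f10, xx, yy]; ring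

lemma bez : AL32 * f10 + BE32 * FXp = S32 := by
  simp only [AL32, BE32, FXp, S32, f10, xx, yy]; ring

lemma sA1 : a1e = C (1/3:ℂ) * IA1 := by
  simp only [a1e, IA1]
  linear_combination (-(xx^3))*e3 - (xx*yy^2)*e43

lemma sB1 : b1e = C (1/3:ℂ) * IB1 := by
  simp only [b1e, IB1]
  linear_combination (xx^2*yy)*e23 + (yy^3)*e3

lemma ddet : a1e * B2e - A2e * b1e = f10 := by
  rw [sA1, sB1]
  linear_combination (C (1/3:ℂ) : C2) * detI + f10 * e3

lemma w1id : a1e * FXp + b1e * FYp = (C (1/3:ℂ) * H1i) * f10 := by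
  rw [sA1, sB1]
  linear_combination (C (1/3:ℂ) : C2) * memI1

lemma f10_ne : f10 ≠ 0 := by
  intro h
  have := congrArg (eval ![2, 1]) h
  simp [f10, xx, yy] at this
  norm_num at this

lemma s1_ne : s1 ≠ 0 := by
  intro h
  have := congrArg (eval fun _ => (1:ℂ)) h
  simp [s1] at this
  norm_num at this

lemma Fxx : finSuccEquiv ℂ 1 xx = Polynomial.X := by rw [xx, finSuccEquiv_X_zero]

lemma Fyy : finSuccEquiv ℂ 1 yy = Polynomial.C (X 0) := by
  rw [yy, show (1 : Fin 2) = Fin.succ 0 from rfl, finSuccEquiv_X_succ]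

lemma FS : finSuccEquiv ℂ 1 S32 = Polynomial.C s1 := by
  rw [show (Polynomial.C s1 : Polynomial (MvPolynomial (Fin 1) ℂ)) =
      54 * Polynomial.C (X 0)^9 + 224 * Polynomial.C (X 0)^10 +
      248 * Polynomial.C (X 0)^11 + 32 * Polynomial.C (X 0)^12 by
    simp only [s1, map_add, map_mul, map_pow, map_ofNat]]
  simp only [S32, map_add, map_mul, map_pow, map_ofNat, Fyy]

lemma monicF : (finSuccEquiv ℂ 1 f10).Monic := by
  have h : finSuccEquiv ℂ 1 f10 =
      (Polynomial.X^3 + Polynomial.C ((X 0 : MvPolynomial (Fin 1) ℂ)^4)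
        + Polynomial.X * Polynomial.C ((X 0 : MvPolynomial (Fin 1) ℂ)^3)) *
      (Polynomial.X^2 - Polynomial.C ((X 0 : MvPolynomial (Fin 1) ℂ)^2)) := by
    simp only [f10, map_mul, map_add, map_sub, map_pow, Fxx, Fyy]
  rw [h]
  apply Polynomial.Monic.mul <;> monicity!

lemma key {u : C2} (h : f10 ∣ u * FXp) : f10 ∣ u := by
  have hS : f10 ∣ u * S32 := by
    have e : u * S32 = (u * AL32) * f10 + BE32 * (u * FXp) := by
      rw [← bez]; ring
    rw [e]
    exact dvd_add (dvd_mul_left f10 (u * AL32)) (h.mul_left BE32)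
  have hF : finSuccEquiv ℂ 1 f10 ∣ (finSuccEquiv ℂ 1 u) * Polynomial.C s1 := by
    rw [← FS, ← map_mul]
    exact map_dvd _ hS
  set P := finSuccEquiv ℂ 1 f10 with hPdef
  set v := finSuccEquiv ℂ 1 u with hvdef
  have hm : P.Monic := monicF
  have e := Polynomial.modByMonic_add_div v P
  have hr : P ∣ (v %ₘ P) * Polynomial.C s1 := by
    have e2 : (v %ₘ P) * Polynomial.C s1
        = v * Polynomial.C s1 - P * ((v /ₘ P) * Polynomial.C s1) := by
      linear_combination Polynomial.C s1 * e
    rw [e2]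
    exact dvd_sub hF (Dvd.intro _ rfl)
  have hr0 : v %ₘ P = 0 := by
    by_contra hne
    have hC : (Polynomial.C s1 : Polynomial (MvPolynomial (Fin 1) ℂ)) ≠ 0 := by
      simpa using s1_ne
    have hprod : (v %ₘ P) * Polynomial.C s1 ≠ 0 := mul_ne_zero hne hC
    have h1 := Polynomial.degree_le_of_dvd hr hprod
    have h2 : ((v %ₘ P) * Polynomial.C s1).degree < P.degree := by
      rw [Polynomial.degree_mul, Polynomial.degree_C s1_ne, add_zero]
      exact Polynomial.degree_modByMonic_lt v hm
    exact absurd h1 (not_le.mpr h2)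
  rw [hr0, zero_add] at e
  have hPv : P ∣ v := ⟨_, e.symm⟩
  obtain ⟨w, hw⟩ := hPv
  have := congrArg (finSuccEquiv ℂ 1).symm hw
  rw [hvdef, AlgEquiv.symm_apply_apply, hPdef, map_mul, AlgEquiv.symm_apply_apply] at this
  exact ⟨_, this⟩

lemma d1x : δ₁ (X 0) = a1e := by
  simp [δ₁, a1e, xx, yy, Derivation.add_apply, Derivation.smul_apply, smul_eq_mul]

lemma d1y : δ₁ (X 1) = b1e := by
  simp [δ₁, b1e, xx, yy, Derivation.add_apply, Derivation.smul_apply, smul_eq_mul]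

lemma d2x : δ₂ (X 0) = A2e := by
  simp [δ₂, A2e, xx, yy, Derivation.add_apply, Derivation.smul_apply, smul_eq_mul]

lemma d2y : δ₂ (X 1) = B2e := by
  simp [δ₂, B2e, xx, yy, Derivation.add_apply, Derivation.smul_apply, smul_eq_mul]

lemma mem1 : δ₁ ∈ logDer f10 := by
  have h : δ₁ f10 = (C (1/3:ℂ) * H1i) * f10 := by
    rw [chain δ₁, d1x, d1y, w1id]
  exact ⟨C (1/3:ℂ) * H1i, by rw [h]; ring⟩

lemma mem2 : δ₂ ∈ logDer f10 := by
  have h : δ₂ f10 = H2e * f10 := by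
    rw [chain δ₂, d2x, d2y, memI2]
  exact ⟨H2e, by rw [h]; ring⟩

noncomputable def ψ : (Fin 2 → C2) →ₗ[C2] Derivation ℂ C2 C2 :=
  (LinearMap.proj 0).smulRight δ₁ + (LinearMap.proj 1).smulRight δ₂

lemma ψ_apply (g : Fin 2 → C2) : ψ g = g 0 • δ₁ + g 1 • δ₂ := rfl

lemma ψ_X0 (g : Fin 2 → C2) : (ψ g) (X 0) = g 0 * a1e + g 1 * A2e := by
  rw [ψ_apply]
  simp [Derivation.add_apply, Derivation.smul_apply, d1x, d2x, smul_eq_mul]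

lemma ψ_X1 (g : Fin 2 → C2) : (ψ g) (X 1) = g 0 * b1e + g 1 * B2e := by
  rw [ψ_apply]
  simp [Derivation.add_apply, Derivation.smul_apply, d1y, d2y, smul_eq_mul]

lemma memψ (g : Fin 2 → C2) : ψ g ∈ logDer f10 := by
  rw [ψ_apply]
  exact (logDer f10).add_mem ((logDer f10).smul_mem _ mem1) ((logDer f10).smul_mem _ mem2)

noncomputable def Φ : (Fin 2 → C2) →ₗ[C2] (logDer f10) := ψ.codRestrict _ memψ

lemma inj : Function.Injective Φ := by
  intro g g' h
  have hψ : ψ g = ψ g' := congrArg Subtype.val h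
  have hx : g 0 * a1e + g 1 * A2e = g' 0 * a1e + g' 1 * A2e := by
    rw [← ψ_X0 g, ← ψ_X0 g', hψ]
  have hy : g 0 * b1e + g 1 * B2e = g' 0 * b1e + g' 1 * B2e := by
    rw [← ψ_X1 g, ← ψ_X1 g', hψ]
  have h0 : (g 0 - g' 0) * f10 = 0 := by
    rw [← ddet]; linear_combination B2e * hx - A2e * hy
  have h1 : (g 1 - g' 1) * f10 = 0 := by
    rw [← ddet]; linear_combination a1e * hy - b1e * hx
  funext i
  fin_cases i
  · exact sub_eq_zero.mp ((mul_eq_zero.mp h0).resolve_right f10_ne)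
  · exact sub_eq_zero.mp ((mul_eq_zero.mp h1).resolve_right f10_ne)

lemma surj : Function.Surjective Φ := by
  rintro ⟨δ, hδ⟩
  obtain ⟨k, hk⟩ := hδ
  set a := δ (X 0) with hadef
  set b := δ (X 1) with hbdef
  have hchain : a * FXp + b * FYp = f10 * k := by rw [← chain δ]; exact hk
  have hu : f10 ∣ (a * B2e - A2e * b) * FXp := by
    have e : (a * B2e - A2e * b) * FXp
        = B2e * (a * FXp + b * FYp) - b * (A2e * FXp + B2e * FYp) := by ring
    rw [e, hchain, memI2]
    exact dvd_sub ((dvd_mul_right f10 k).mul_left B2e) ((dvd_mul_left f10 H2e).mul_left b)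
  have hv : f10 ∣ (a1e * b - a * b1e) * FXp := by
    have e : (a1e * b - a * b1e) * FXp
        = b * (a1e * FXp + b1e * FYp) - b1e * (a * FXp + b * FYp) := by ring
    rw [e, hchain, w1id]
    exact dvd_sub ((dvd_mul_left f10 _).mul_left b) ((dvd_mul_right f10 k).mul_left b1e)
  obtain ⟨p, hp⟩ := key hu
  obtain ⟨q, hq⟩ := key hv
  have hpa : p * a1e + q * A2e = a := by
    apply mul_left_cancel₀ f10_ne
    linear_combination (-a1e) * hp - A2e * hq + a * ddet
  have hpb : p * b1e + q * B2e = b := by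
    apply mul_left_cancel₀ f10_ne
    linear_combination (-b1e) * hp - B2e * hq + b * ddet
  refine ⟨![p, q], ?_⟩
  apply Subtype.ext
  show ψ ![p, q] = δ
  apply derivation_ext
  intro i
  fin_cases i
  · rw [show X (⟨0, by norm_num⟩ : Fin 2) = (X 0 : C2) from rfl, ψ_X0]
    rw [show (![p, q] : Fin 2 → C2) 0 = p from rfl, show (![p, q] : Fin 2 → C2) 1 = q from rfl]
    rw [hpa, hadef]
  · rw [show X (⟨1, by norm_num⟩ : Fin 2) = (X 1 : C2) from rfl, ψ_X1]
    rw [show (![p, q] : Fin 2 → C2) 0 = p from rfl, show (![p, q] : Fin 2 → C2) 1 = q from rfl]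
    rw [hpb, hbdef]

noncomputable def eqv : (Fin 2 → C2) ≃ₗ[C2] (logDer f10) :=
  LinearEquiv.ofBijective Φ ⟨inj, surj⟩

noncomputable def B : Module.Basis (Fin 2) C2 (logDer f10) := (Pi.basisFun C2 (Fin 2)).map eqv

lemma B0 : B 0 = Φ (Pi.single 0 1) := by
  rw [B, Module.Basis.map_apply, Pi.basisFun_apply]; rfl

lemma B1 : B 1 = Φ (Pi.single 1 1) := by
  rw [B, Module.Basis.map_apply, Pi.basisFun_apply]; rfl

end Stmt10Aux

open Stmt10Aux in
/-- for `f = (x³ + y⁴ + xy³)(x² − y²)`, the derivations `δ₁, δ₂`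
belong to `Der(−log f)` and form a `ℂ[x,y]`-basis of it. -/
theorem stmt10 :
    ∃ (h1 : δ₁ ∈ logDer f10) (h2 : δ₂ ∈ logDer f10),
      ∃ B : Module.Basis (Fin 2) (MvPolynomial (Fin 2) ℂ) (logDer f10),
        B 0 = ⟨δ₁, h1⟩ ∧ B 1 = ⟨δ₂, h2⟩ := by
  refine ⟨mem1, mem2, B, ?_, ?_⟩
  · rw [B0]
    apply Subtype.ext
    show ψ (Pi.single 0 1) = δ₁
    rw [ψ_apply]
    simp
  · rw [B1]
    apply Subtype.ext
    show ψ (Pi.single 1 1) = δ₂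
    rw [ψ_apply]
    simp
end
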